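/- Let M, p, q be natural numbers, F ∈ ℂ^{M×p}, G ∈ ℂ^{M×q}, H ∈ ℂ^{p×q}, and r ∈ ℂ^M. Then ‖H + Fᴴ diag(r) G‖_F² = ‖H‖_F² + rᴴ((FFᴴ) ⊙ (GGᴴ)*) r + 2 Re(rᴴ w), where w ∈ ℂ^M is the vector with entries w_m = (F H Gᴴ)_{mm}. -/

import Mathlib

open Matrix Finset

private lemma perm4 {α β γ δ N : Type*} [Fintype α] [Fintype β] [Fintype γ] [Fintype δ]
    [AddCommMonoid N] (f : α → β → γ → δ → N) :
    ∑ a, ∑ b, ∑ c, ∑ d, f a b c d = ∑ d, ∑ c, ∑ a, ∑ b, f a b c d := by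
  trans ∑ x : α × β × γ × δ, f x.1 x.2.1 x.2.2.1 x.2.2.2
  · simp [Fintype.sum_prod_type]
  trans ∑ y : δ × γ × α × β, f y.2.2.1 y.2.2.2 y.2.1 y.1
  · exact Fintype.sum_equiv ⟨fun x => (x.2.2.2, x.2.2.1, x.1, x.2.1),
      fun y => (y.2.2.1, y.2.2.2, y.2.1, y.1), fun _ => rfl, fun _ => rfl⟩ _ _ (fun _ => rfl)
  · simp [Fintype.sum_prod_type]

private lemma rev3 {α β γ N : Type*} [Fintype α] [Fintype β] [Fintype γ]
    [AddCommMonoid N] (f : α → β → γ → N) :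
    ∑ a, ∑ b, ∑ c, f a b c = ∑ c, ∑ b, ∑ a, f a b c := by
  trans ∑ x : α × β × γ, f x.1 x.2.1 x.2.2
  · simp [Fintype.sum_prod_type]
  trans ∑ y : γ × β × α, f y.2.2 y.2.1 y.1
  · exact Fintype.sum_equiv ⟨fun x => (x.2.2, x.2.1, x.1),
      fun y => (y.2.2, y.2.1, y.1), fun _ => rfl, fun _ => rfl⟩ _ _ (fun _ => rfl)
  · simp [Fintype.sum_prod_type]

/-- Frobenius-norm expansion of the interference leakage for a single link:
`‖H + Fᴴ diag(r) G‖_F² = ‖H‖_F² + rᴴ((FFᴴ) ⊙ (GGᴴ)*) r + 2 Re(rᴴ w)`,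
where `w m = (F H Gᴴ) m m`. -/
theorem frobenius_expansion (M p q : ℕ)
    (F : Matrix (Fin M) (Fin p) ℂ) (G : Matrix (Fin M) (Fin q) ℂ)
    (H : Matrix (Fin p) (Fin q) ℂ) (r : Fin M → ℂ)
    (w : Fin M → ℂ) (hw : ∀ m, w m = (F * H * Gᴴ) m m) :
    ((∑ i, ∑ j, ‖(H + Fᴴ * Matrix.diagonal r * G) i j‖ ^ 2 : ℝ) : ℂ)
      = ((∑ i, ∑ j, ‖H i j‖ ^ 2 : ℝ) : ℂ)
        + star r ⬝ᵥ (Matrix.hadamard (F * Fᴴ) ((G * Gᴴ).map (starRingEnd ℂ))).mulVec r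
        + 2 * ((star r ⬝ᵥ w).re : ℂ) := by
  have key : ∀ z : ℂ, ((‖z‖ ^ 2 : ℝ) : ℂ) = z * starRingEnd ℂ z := fun z => by
    rw [Complex.mul_conj]; norm_cast; rw [← Complex.sq_norm]
  have hB : ∀ i j, (Fᴴ * Matrix.diagonal r * G) i j = ∑ m, star (F m i) * r m * G m j := by
    intro i j
    simp [Matrix.mul_assoc, mul_apply, diagonal_apply, conjTranspose_apply, ite_mul, zero_mul,
      mul_assoc, Finset.sum_ite_eq, Finset.sum_ite_eq']
  have hQ : star r ⬝ᵥ (Matrix.hadamard (F * Fᴴ) ((G * Gᴴ).map (starRingEnd ℂ))).mulVec r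
      = ∑ i, ∑ j, (Fᴴ * Matrix.diagonal r * G) i j
          * starRingEnd ℂ ((Fᴴ * Matrix.diagonal r * G) i j) := by
    simp only [hB, dotProduct, mulVec, hadamard_apply, map_apply, mul_apply, conjTranspose_apply,
      map_sum, _root_.map_mul, Pi.star_apply, Finset.sum_mul, Finset.mul_sum]
    rw [perm4 (fun (a : Fin M) (b : Fin M) (c : Fin q) (d : Fin p) =>
      star (r a) * (F a d * star (F b d)
        * ((starRingEnd ℂ) (G a c) * (starRingEnd ℂ) (star (G b c))) * r b))]
    refine Finset.sum_congr rfl fun _ _ => Finset.sum_congr rfl fun _ _ =>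
      Finset.sum_congr rfl fun _ _ => Finset.sum_congr rfl fun _ _ => ?_
    simp only [starRingEnd_apply, star_star]
    ring
  have hC : star r ⬝ᵥ w
      = ∑ i, ∑ j, H i j * starRingEnd ℂ ((Fᴴ * Matrix.diagonal r * G) i j) := by
    simp only [hB, hw, dotProduct, mul_apply, conjTranspose_apply,
      map_sum, _root_.map_mul, Pi.star_apply, Finset.sum_mul, Finset.mul_sum]
    rw [rev3 (fun (a : Fin M) (b : Fin q) (c : Fin p) =>
      star (r a) * (F a c * H c b * star (G a b)))]
    refine Finset.sum_congr rfl fun _ _ => Finset.sum_congr rfl fun _ _ =>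
      Finset.sum_congr rfl fun _ _ => ?_
    simp only [starRingEnd_apply, star_star]
    ring
  have h2 : 2 * (((star r ⬝ᵥ w).re : ℝ) : ℂ)
      = (∑ i, ∑ j, H i j * starRingEnd ℂ ((Fᴴ * Matrix.diagonal r * G) i j))
        + ∑ i, ∑ j, starRingEnd ℂ (H i j) * (Fᴴ * Matrix.diagonal r * G) i j := by
    rw [show (2:ℂ) * (((star r ⬝ᵥ w).re : ℝ) : ℂ) = ((2 * (star r ⬝ᵥ w).re : ℝ) : ℂ) by push_cast; ring,
      ← Complex.add_conj, hC]
    congr 1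
    simp only [map_sum, _root_.map_mul, Complex.conj_conj]
  rw [hQ, h2, Complex.ofReal_sum, Complex.ofReal_sum]
  simp only [Complex.ofReal_sum, key]
  simp only [← Finset.sum_add_distrib]
  refine Finset.sum_congr rfl fun i _ => Finset.sum_congr rfl fun j _ => ?_
  simp only [Pi.add_apply, Matrix.add_apply, map_add]
  ring
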